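/- Let U be an ultrafilter on ℕ and let γ, γ' : ℕ → ℕ with γ'_n ≥ 1 for all n and with γ_n/γ'_n → 0 along U. For each n let X_n be a finite set, E'_n ⊆ X_n a subset with |E'_n| = γ'_n, and ξ_n = (γ'_n)^{-1/2}·χ_{E'_n} ∈ l²(X_n). Then for every k ∈ ℕ, every sequence of functions η_n : X_n → ℂ with |supp η_n| ≤ k·γ_n for all n, and every ε > 0, the set {n ∈ ℕ : ‖ξ_n − η_n‖² > 1 − ε} belongs to U. In particular, ‖ξ_n − η_n‖ does not converge to 0 along U. -/

import Mathlib

open Filter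

/-- With γ_n/γ'_n → 0 along an ultrafilter U, ξ_n the normalized
indicator of a set E'_n of size γ'_n, and η_n supported on at most k·γ_n points,
the set {n : ‖ξ_n − η_n‖² > 1 − ε} belongs to U for every ε > 0; in particular
‖ξ_n − η_n‖ does not tend to 0 along U. -/
theorem stmt_1 (U : Ultrafilter ℕ) (γ γ' : ℕ → ℕ) (hγ'1 : ∀ n, 1 ≤ γ' n)
    (hratio : Tendsto (fun n => (γ n : ℝ) / (γ' n : ℝ)) (U : Filter ℕ) (nhds 0))
    (X : ℕ → Type*) [∀ n, Fintype (X n)] [∀ n, DecidableEq (X n)]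
    (E' : ∀ n, Finset (X n)) (hE' : ∀ n, (E' n).card = γ' n)
    (ξ : ∀ n, X n → ℂ)
    (hξ : ∀ n x, ξ n x = if x ∈ E' n then ((Real.sqrt (γ' n))⁻¹ : ℂ) else 0) :
    ∀ (k : ℕ) (η : ∀ n, X n → ℂ),
      (∀ n, (Function.support (η n)).ncard ≤ k * γ n) →
      (∀ ε : ℝ, 0 < ε →
        {n : ℕ | 1 - ε < ∑ x, ‖ξ n x - η n x‖ ^ 2} ∈ U) ∧
      ¬ Tendsto (fun n => Real.sqrt (∑ x, ‖ξ n x - η n x‖ ^ 2))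
          (U : Filter ℕ) (nhds 0) := by
  intro k η hη
  have key : ∀ n, (1 : ℝ) - (k * γ n : ℝ) / (γ' n : ℝ) ≤
      ∑ x, ‖ξ n x - η n x‖ ^ 2 := by
    intro n
    have hγ'pos : (0:ℝ) < (γ' n : ℝ) := by exact_mod_cast hγ'1 n
    classical
    set s : Finset (X n) := Finset.univ.filter (fun x => η n x ≠ 0) with hs
    have hscard : s.card ≤ k * γ n := by
      have h1 : (Function.support (η n)).ncard = s.card := by
        rw [← Set.ncard_coe_finset]
        congr 1
        ext x
        simp [hs, Function.mem_support]
      rw [← h1]; exact hη n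
    set D : Finset (X n) := E' n \ s with hD
    have hDcard : γ' n - k * γ n ≤ D.card := by
      have h2 : (E' n).card - s.card ≤ D.card := Finset.le_card_sdiff s (E' n)
      rw [hE'] at h2
      omega
    have hterm : ∀ x ∈ D, ‖ξ n x - η n x‖ ^ 2 = (γ' n : ℝ)⁻¹ := by
      intro x hx
      rw [hD, Finset.mem_sdiff] at hx
      obtain ⟨hxE, hxs⟩ := hx
      have hηx : η n x = 0 := by
        by_contra h
        exact hxs (by simp [hs, h])
      rw [hηx, sub_zero, hξ n x, if_pos hxE]
      rw [norm_inv]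
      rw [Complex.norm_real, Real.norm_of_nonneg (Real.sqrt_nonneg _)]
      rw [inv_pow, Real.sq_sqrt (le_of_lt hγ'pos)]
    have hsum : (D.card : ℝ) * (γ' n : ℝ)⁻¹ ≤ ∑ x, ‖ξ n x - η n x‖ ^ 2 := by
      calc (D.card : ℝ) * (γ' n : ℝ)⁻¹ = ∑ x ∈ D, ‖ξ n x - η n x‖ ^ 2 := by
            rw [Finset.sum_congr rfl hterm, Finset.sum_const, nsmul_eq_mul]
        _ ≤ ∑ x, ‖ξ n x - η n x‖ ^ 2 := by
            apply Finset.sum_le_sum_of_subset_of_nonneg (Finset.subset_univ D)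
            intro i _ _; positivity
    have hcast : (γ' n : ℝ) - (k:ℝ) * (γ n:ℝ) ≤ (D.card : ℝ) := by
      rcases le_or_gt (k * γ n) (γ' n) with h | h
      · have h3 : ((γ' n - k * γ n : ℕ) : ℝ) ≤ (D.card : ℝ) := by exact_mod_cast hDcard
        rw [Nat.cast_sub h] at h3
        push_cast at h3 ⊢
        linarith
      · have hD0 : (0:ℝ) ≤ (D.card : ℝ) := by positivity
        have h4 : (γ' n : ℝ) ≤ (k:ℝ) * (γ n : ℝ) := by exact_mod_cast h.le
        linarith
    refine le_trans ?_ hsum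
    have h1 : 1 - (k:ℝ) * (γ n : ℝ) / (γ' n : ℝ) = ((γ' n:ℝ) - (k:ℝ)*(γ n:ℝ))/(γ' n:ℝ) := by
      field_simp
    push_cast
    rw [h1, div_eq_mul_inv]
    exact mul_le_mul_of_nonneg_right hcast (by positivity)
  have hmem : ∀ ε : ℝ, 0 < ε →
      {n : ℕ | 1 - ε < ∑ x, ‖ξ n x - η n x‖ ^ 2} ∈ U := by
    intro ε hε
    have htend : Tendsto (fun n => (k * γ n : ℝ) / (γ' n : ℝ)) (U : Filter ℕ) (nhds 0) := by
      have := hratio.const_mul (k : ℝ)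
      simpa [mul_div_assoc, mul_comm] using this
    have hev : ∀ᶠ n in (U : Filter ℕ), (k * γ n : ℝ) / (γ' n : ℝ) < ε := by
      have := htend.eventually (eventually_lt_nhds hε)
      simpa using this
    apply Filter.mem_of_superset hev
    intro n hn
    simp only [Set.mem_setOf_eq] at hn ⊢
    calc 1 - ε < 1 - (k * γ n : ℝ) / (γ' n : ℝ) := by linarith
      _ ≤ _ := key n
  refine ⟨hmem, ?_⟩
  intro htend
  have h1 : {n : ℕ | 1 - (1/2 : ℝ) < ∑ x, ‖ξ n x - η n x‖ ^ 2} ∈ U :=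
    hmem (1/2) (by norm_num)
  have h2 : ∀ᶠ n in (U : Filter ℕ),
      Real.sqrt (∑ x, ‖ξ n x - η n x‖ ^ 2) < 1/2 := by
    have := htend.eventually (eventually_lt_nhds (show (0:ℝ) < 1/2 by norm_num))
    simpa using this
  obtain ⟨n, hn1, hn2⟩ := Filter.nonempty_of_mem (Filter.inter_mem h1 h2)
  simp only [Set.mem_setOf_eq] at hn1 hn2
  have hS : (0:ℝ) ≤ ∑ x, ‖ξ n x - η n x‖ ^ 2 := by positivity
  have := Real.sq_sqrt hS
  nlinarith [Real.sqrt_nonneg (∑ x, ‖ξ n x - η n x‖ ^ 2)]
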